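/- Every infinite virtually cyclic group G surjects onto either ℤ or the infinite dihedral group D∞ with finite kernel. -/

import Mathlib

open Subgroup Multiplicative

lemma subgroup_int_equiv (S : Subgroup (Multiplicative ℤ)) (hS : S ≠ ⊥) :
    Nonempty (↥S ≃* Multiplicative ℤ) := by
  obtain ⟨a, ha⟩ := Int.subgroup_cyclic (Subgroup.toAddSubgroup' S)
  have hmem : ∀ x : ℤ, Multiplicative.ofAdd x ∈ S ↔ ∃ k : ℤ, k * a = x := by
    intro x
    have : Multiplicative.ofAdd x ∈ S ↔ x ∈ Subgroup.toAddSubgroup' S := Iff.rfl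
    rw [this, ha, AddSubgroup.mem_closure_singleton]
    simp [zsmul_eq_mul]
  have ha0 : a ≠ 0 := by
    rintro rfl
    apply hS
    ext x
    simp only [Subgroup.mem_bot]
    constructor
    · intro hx
      obtain ⟨k, hk⟩ := (hmem (Multiplicative.toAdd x)).mp (by simpa using hx)
      have : Multiplicative.toAdd x = 0 := by omega
      have := congrArg Multiplicative.ofAdd this
      simpa using this
    · rintro rfl; exact S.one_mem
  let g : Multiplicative ℤ →* Multiplicative ℤ :=
    MonoidHom.mk' (fun k => Multiplicative.ofAdd (Multiplicative.toAdd k * a))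
      (by intro x y; simp [add_mul])
  have hgmem : ∀ k, g k ∈ S := by
    intro k
    exact (hmem _).mpr ⟨Multiplicative.toAdd k, rfl⟩
  let g' : Multiplicative ℤ →* ↥S := g.codRestrict S hgmem
  have hinj : Function.Injective g' := by
    intro x y hxy
    have : g x = g y := congrArg Subtype.val hxy
    have h2 : Multiplicative.toAdd x * a = Multiplicative.toAdd y * a := by
      simpa [g] using congrArg Multiplicative.toAdd this
    have := mul_right_cancel₀ ha0 h2
    exact Multiplicative.toAdd.injective this
  have hsurj : Function.Surjective g' := by
    rintro ⟨x, hx⟩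
    obtain ⟨k, hk⟩ := (hmem (Multiplicative.toAdd x)).mp (by simpa using hx)
    refine ⟨Multiplicative.ofAdd k, ?_⟩
    apply Subtype.ext
    show Multiplicative.ofAdd (k * a) = x
    rw [hk]
    rfl
  exact ⟨(MulEquiv.ofBijective g' ⟨hinj, hsurj⟩).symm⟩

lemma d0_r_mul_r (i j : ℤ) :
    (DihedralGroup.r i : DihedralGroup 0) * DihedralGroup.r j = DihedralGroup.r (i + j) := rfl

lemma d0_r_mul_sr (i j : ℤ) :
    (DihedralGroup.r i : DihedralGroup 0) * DihedralGroup.sr j = DihedralGroup.sr (j - i) := rfl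

lemma d0_sr_mul_r (i j : ℤ) :
    (DihedralGroup.sr i : DihedralGroup 0) * DihedralGroup.r j = DihedralGroup.sr (i + j) := rfl

lemma d0_sr_mul_sr (i j : ℤ) :
    (DihedralGroup.sr i : DihedralGroup 0) * DihedralGroup.sr j = DihedralGroup.r (j - i) := rfl

/-- A group is *virtually cyclic* if it contains a cyclic subgroup of finite index. -/
def IsVirtuallyCyclic (G : Type*) [Group G] : Prop :=
  ∃ H : Subgroup G, IsCyclic H ∧ H.FiniteIndex

/-- Every infinite virtually cyclic group surjects onto `ℤ` or onto the infinite
dihedral group `D∞` (here `DihedralGroup 0`) with finite kernel. -/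
theorem infinite_virtuallyCyclic_surjects_int_or_dihedral
    (G : Type*) [Group G] [Infinite G] (h : IsVirtuallyCyclic G) :
    (∃ f : G →* Multiplicative ℤ, Function.Surjective f ∧ Finite f.ker) ∨
      (∃ f : G →* DihedralGroup 0, Function.Surjective f ∧ Finite f.ker) := by
  classical
  obtain ⟨H, hHcyc, hHfi⟩ := h
  haveI := hHfi
  -- a finite-index subgroup of an infinite group is infinite
  have infinite_of_fi : ∀ (K : Subgroup G) [K.FiniteIndex], Infinite ↥K := by
    intro K _
    by_contra hfin
    rw [not_infinite_iff_finite] at hfin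
    haveI : Finite (G ⧸ K) := K.finite_quotient_of_finiteIndex
    haveI : Finite G := Finite.of_equiv _ (Subgroup.groupEquivQuotientProdSubgroup (s := K)).symm
    exact not_finite G
  haveI : Infinite ↥H := infinite_of_fi H
  -- generator of H
  obtain ⟨g₀, hg₀⟩ := hHcyc.exists_generator
  set b : G := (g₀ : G) with hb
  have hHz : ∀ x ∈ H, ∃ k : ℤ, b ^ k = x := by
    intro x hx
    obtain ⟨k, hk⟩ := hg₀ ⟨x, hx⟩
    exact ⟨k, by simpa using congrArg Subtype.val hk⟩
  have hbord : ¬ IsOfFinOrder b := by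
    intro hfo
    have hHle : H ≤ Subgroup.zpowers b := by
      intro x hx
      obtain ⟨k, hk⟩ := hHz x hx
      exact ⟨k, hk⟩
    have hfin : (Subgroup.zpowers b : Set G).Finite := finite_zpowers.mpr hfo
    have hfin2 : (H : Set G).Finite := hfin.subset hHle
    exact Set.not_infinite.mpr hfin2 (Set.infinite_coe_iff.mp inferInstance)
  have hbinj : Function.Injective (fun k : ℤ => b ^ k) :=
    injective_zpow_iff_not_isOfFinOrder.mpr hbord
  -- the normal core
  set N : Subgroup G := H.normalCore with hNdef
  haveI hNnorm : N.Normal := H.normalCore_normal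
  haveI hNfi : N.FiniteIndex := H.finiteIndex_normalCore
  haveI : Infinite ↥N := infinite_of_fi N
  have hNH : N ≤ H := H.normalCore_le
  -- N is generated by z = b ^ a
  obtain ⟨a, hA⟩ := Int.subgroup_cyclic (Subgroup.toAddSubgroup' (N.comap (zpowersHom G b)))
  have hAmem : ∀ k : ℤ, b ^ k ∈ N ↔ ∃ j : ℤ, j * a = k := by
    intro k
    have h1 : b ^ k ∈ N ↔ Multiplicative.ofAdd k ∈ N.comap (zpowersHom G b) := by
      simp [Subgroup.mem_comap]
    have h2 : Multiplicative.ofAdd k ∈ N.comap (zpowersHom G b) ↔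
        k ∈ Subgroup.toAddSubgroup' (N.comap (zpowersHom G b)) := Iff.rfl
    rw [h1, h2, hA, AddSubgroup.mem_closure_singleton]
    simp [zsmul_eq_mul]
  set z : G := b ^ a with hzdef
  have hzN : z ∈ N := (hAmem a).mpr ⟨1, one_mul a⟩
  have hNz : ∀ x ∈ N, ∃ j : ℤ, z ^ j = x := by
    intro x hx
    obtain ⟨k, hk⟩ := hHz x (hNH hx)
    obtain ⟨j, hj⟩ := (hAmem k).mp (hk ▸ hx)
    exact ⟨j, by rw [hzdef, ← zpow_mul, mul_comm a j, hj, hk]⟩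
  have ha0 : a ≠ 0 := by
    rintro rfl
    have : ∀ x : ↥N, x = 1 := by
      rintro ⟨x, hx⟩
      obtain ⟨j, hj⟩ := hNz x hx
      simp only [hzdef, zpow_zero, one_zpow] at hj
      exact Subtype.ext hj.symm
    haveI : Subsingleton ↥N := ⟨fun x y => (this x).trans (this y).symm⟩
    exact not_finite ↥N
  have hzinj : ∀ j₁ j₂ : ℤ, z ^ j₁ = z ^ j₂ → j₁ = j₂ := by
    intro j₁ j₂ hj
    rw [hzdef, ← zpow_mul, ← zpow_mul] at hj
    have := hbinj hj
    exact mul_left_cancel₀ ha0 this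
  have hz1 : ∀ j : ℤ, z ^ j = 1 → j = 0 := fun j hj => hzinj j 0 (by simpa using hj)
  have htorN : ∀ x ∈ N, ∀ m : ℤ, m ≠ 0 → x ^ m = 1 → x = 1 := by
    intro x hx m hm hxm
    obtain ⟨j, rfl⟩ := hNz x hx
    rw [← zpow_mul] at hxm
    have := hz1 _ hxm
    have hj0 : j = 0 := by
      rcases mul_eq_zero.mp this with h' | h'
      · exact h'
      · exact absurd h' hm
    rw [hj0, zpow_zero]
  -- the centralizer of z
  set P : Subgroup G := Subgroup.centralizer {z} with hPdef
  have hPmem : ∀ g : G, g ∈ P ↔ z * g = g * z := by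
    intro g
    rw [hPdef, Subgroup.mem_centralizer_iff]
    simp
  have hPconj : ∀ g ∈ P, ∀ x ∈ N, g * x * g⁻¹ = x := by
    intro g hg x hx
    obtain ⟨j, rfl⟩ := hNz x hx
    have hc : Commute z g := (hPmem g).mp hg
    have : Commute (z ^ j) g := hc.zpow_left j
    rw [← this.eq, mul_assoc, mul_inv_cancel, mul_one]
  have hNP : N ≤ P := by
    intro x hx
    rw [hPmem]
    obtain ⟨j, rfl⟩ := hNz x hx
    exact (Commute.self_zpow z j).eq
  -- conjugation sends z to z or to z⁻¹
  have hconj : ∀ g : G, g * z * g⁻¹ = z ∨ g * z * g⁻¹ = z⁻¹ := by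
    intro g
    have h1 : g * z * g⁻¹ ∈ N := hNnorm.conj_mem z hzN g
    obtain ⟨m, hm⟩ := hNz _ h1
    have h2 : g⁻¹ * z * g ∈ N := by
      have := hNnorm.conj_mem z hzN g⁻¹
      simpa using this
    obtain ⟨k, hk⟩ := hNz _ h2
    have hcalc : z ^ (m * k) = z ^ (1 : ℤ) := by
      rw [zpow_mul, hm, conj_zpow, hk, zpow_one]
      group
    have hmk : m * k = 1 := hzinj _ _ hcalc
    rcases Int.eq_one_or_neg_one_of_mul_eq_one' hmk with ⟨hm1, -⟩ | ⟨hm1, -⟩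
    · left; rw [← hm, hm1, zpow_one]
    · right; rw [← hm, hm1, zpow_neg_one]
  have hconjneg : ∀ g : G, g ∉ P → ∀ x ∈ N, g * x * g⁻¹ = x⁻¹ := by
    intro g hg x hx
    have hz' : g * z * g⁻¹ = z⁻¹ := by
      rcases hconj g with h' | h'
      · exfalso
        apply hg
        rw [hPmem]
        have h'' := congrArg (· * g) h'
        simp only [mul_assoc, inv_mul_cancel, mul_one] at h''
        exact h''.symm
      · exact h'
    obtain ⟨j, rfl⟩ := hNz x hx
    calc g * z ^ j * g⁻¹ = (g * z * g⁻¹) ^ j := conj_zpow.symm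
      _ = (z⁻¹) ^ j := by rw [hz']
      _ = (z ^ j)⁻¹ := by rw [inv_zpow]
  -- the subgroup N viewed inside P, and transfer setup
  set M : Subgroup ↥P := N.subgroupOf P with hMdef
  haveI hMfi : M.FiniteIndex := inferInstance
  have hfNmem : ∀ k : Multiplicative ℤ, zpowersHom G z k ∈ N := fun k => N.zpow_mem hzN _
  set fN : Multiplicative ℤ →* ↥N := (zpowersHom G z).codRestrict N hfNmem with hfNdef
  have hfNinj : Function.Injective fN := by
    intro x y hxy
    have h' : z ^ (Multiplicative.toAdd x) = z ^ (Multiplicative.toAdd y) :=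
      congrArg Subtype.val hxy
    exact Multiplicative.toAdd.injective (hzinj _ _ h')
  have hfNsurj : Function.Surjective fN := by
    rintro ⟨x, hx⟩
    obtain ⟨j, hj⟩ := hNz x hx
    exact ⟨Multiplicative.ofAdd j, Subtype.ext hj⟩
  set eN := MulEquiv.ofBijective fN ⟨hfNinj, hfNsurj⟩ with heNdef
  set ι := eN.symm with hιdef
  have hιz : ∀ (k : ℤ) (hk : z ^ k ∈ N), ι (⟨z ^ k, hk⟩ : ↥N) = Multiplicative.ofAdd k := by
    intro k hk
    rw [hιdef, MulEquiv.symm_apply_eq]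
    exact Subtype.ext rfl
  set ϕ : ↥M →* Multiplicative ℤ :=
    ι.toMonoidHom.comp (Subgroup.subgroupOfEquivOfLe hNP).toMonoidHom with hϕdef
  set V : ↥P →* Multiplicative ℤ := MonoidHom.transfer ϕ with hVdef
  set n : ℕ := M.index with hndef
  have hn0 : n ≠ 0 := hMfi.index_ne_zero
  have hn0' : (n : ℤ) ≠ 0 := by exact_mod_cast hn0
  have hkey : ∀ (g : ↥P) (k : ℕ) (g₀ : ↥P), g₀⁻¹ * g ^ k * g₀ ∈ M →
      g₀⁻¹ * g ^ k * g₀ = g ^ k := by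
    intro g k g₀ hmem'
    have hcoe : ((g₀⁻¹ * g ^ k * g₀ : ↥P) : G)
        = ((g₀ : G))⁻¹ * ((g : G)) ^ k * (g₀ : G) := by push_cast; rfl
    have hm : ((g₀ : G))⁻¹ * ((g : G)) ^ k * (g₀ : G) ∈ N := by rw [← hcoe]; exact hmem'
    have hc := hPconj (g₀ : G) g₀.2 _ hm
    have hl : (g₀ : G) * (((g₀ : G))⁻¹ * ((g : G)) ^ k * (g₀ : G)) * ((g₀ : G))⁻¹
        = ((g : G)) ^ k := by group
    rw [hl] at hc
    apply Subtype.ext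
    rw [hcoe, SubmonoidClass.coe_pow]
    exact hc.symm
  have hpowmem : ∀ g : ↥P, ((g : G)) ^ n ∈ N := by
    intro g
    have h' := MonoidHom.transfer_eq_pow_aux (H := M) g (hkey g)
    have h2 : ((g ^ n : ↥P) : G) ∈ N := h'
    simpa using h2
  have hVval : ∀ g : ↥P, V g = ι ⟨((g : G)) ^ n, hpowmem g⟩ := by
    intro g
    rw [hVdef, MonoidHom.transfer_eq_pow ϕ g (hkey g)]
    show ι ((Subgroup.subgroupOfEquivOfLe hNP) _) = _
    congr 1
  have hzP : z ∈ P := hNP hzN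
  have hVz : V ⟨z, hzP⟩ = Multiplicative.ofAdd (n : ℤ) := by
    have hmem2 : z ^ (n : ℤ) ∈ N := by rw [zpow_natCast]; exact hpowmem ⟨z, hzP⟩
    have heq : (⟨((⟨z, hzP⟩ : ↥P) : G) ^ n, hpowmem _⟩ : ↥N) = ⟨z ^ (n : ℤ), hmem2⟩ :=
      Subtype.ext (by simp [zpow_natCast])
    rw [hVval, heq, hιz]
  have hVzne : V ⟨z, hzP⟩ ≠ 1 := by
    rw [hVz]
    intro h'
    have := congrArg Multiplicative.toAdd h'
    simp at this
    exact hn0' (by exact_mod_cast this)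
  have hker1 : ∀ x : ↥P, V x = 1 → ((x : G)) ^ (n : ℤ) = 1 := by
    intro x hx
    rw [hVval] at hx
    have h' : (⟨((x : G)) ^ n, hpowmem x⟩ : ↥N) = 1 := ι.injective (by simpa using hx)
    have h'' := congrArg Subtype.val h'
    simpa [zpow_natCast] using h''
  haveI : Finite (G ⧸ N) := N.finite_quotient_of_finiteIndex
  have hKfin : Finite ↥V.ker := by
    have hinj : Function.Injective
        (fun x : ↥V.ker => ((((x : ↥P) : G)) : G ⧸ N)) := by
      intro x y hxy
      rw [QuotientGroup.eq] at hxy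
      have hk : ((x : ↥P)⁻¹ * (y : ↥P) : ↥P) ∈ V.ker :=
        V.ker.mul_mem (V.ker.inv_mem x.2) y.2
      have h1 : (((x : ↥P)⁻¹ * (y : ↥P) : ↥P) : G) ^ ((n : ℤ)) = 1 := hker1 _ hk
      have hcoe : (((x : ↥P)⁻¹ * (y : ↥P) : ↥P) : G)
          = (((x : ↥P) : G))⁻¹ * (((y : ↥P)) : G) := by push_cast; rfl
      rw [hcoe] at h1
      have h2 := htorN _ hxy (n : ℤ) hn0' h1
      have h3 : (((x : ↥P)) : G) = (((y : ↥P)) : G) := by rwa [inv_mul_eq_one] at h2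
      exact Subtype.ext (Subtype.ext h3)
    exact Finite.of_injective _ hinj
  by_cases hP : ∀ g : G, g ∈ P
  · -- `z` is central: surjection onto ℤ
    left
    have hPtop : P = ⊤ := (Subgroup.eq_top_iff' P).mpr hP
    set ε : G ≃* ↥P := (Subgroup.topEquiv).symm.trans (MulEquiv.subgroupCongr hPtop.symm)
      with hεdef
    set W : G →* Multiplicative ℤ := V.comp ε.toMonoidHom with hWdef
    have hWV : ∀ g : G, W g = V (ε g) := fun g => rfl
    have hWz : W z = Multiplicative.ofAdd (n : ℤ) := by
      have hεz : ε z = ⟨z, hzP⟩ := Subtype.ext rfl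
      rw [hWV, hεz, hVz]
    have hSne : W.range ≠ ⊥ := by
      intro hbot
      have hmem' : W z ∈ W.range := ⟨z, rfl⟩
      rw [hbot, Subgroup.mem_bot, hWz] at hmem'
      exact hVzne (hVz.trans hmem')
    obtain ⟨e⟩ := subgroup_int_equiv W.range hSne
    refine ⟨e.toMonoidHom.comp W.rangeRestrict, ?_, ?_⟩
    · exact e.surjective.comp W.rangeRestrict_surjective
    · have hker : ∀ x : G, e.toMonoidHom.comp W.rangeRestrict x = 1 → V (ε x) = 1 := by
        intro x hx
        have h1 : W.rangeRestrict x = 1 := e.injective (by simpa using hx)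
        have h2 := congrArg Subtype.val h1
        simpa [hWV] using h2
      have hinj : Function.Injective
          (fun x : ↥(e.toMonoidHom.comp W.rangeRestrict).ker =>
            (⟨ε (x : G), hker _ x.2⟩ : ↥V.ker)) := by
        intro x y hxy
        have h' := congrArg Subtype.val hxy
        exact Subtype.ext (ε.injective h')
      exact Finite.of_injective _ hinj
  · -- there is an element inverting `z`: surjection onto the infinite dihedral group
    right
    push_neg at hP
    obtain ⟨s, hs⟩ := hP
    have hPof : ∀ g : G, g * z * g⁻¹ = z → g ∈ P := by
      intro g hg
      rw [hPmem]
      have h'' := congrArg (· * g) hg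
      simp only [mul_assoc, inv_mul_cancel, mul_one] at h''
      exact h''.symm
    have hmul : ∀ u v : G, u ∉ P → v ∉ P → u * v ∈ P := by
      intro u v hu hv
      apply hPof
      calc (u*v) * z * (u*v)⁻¹ = u * (v * z * v⁻¹) * u⁻¹ := by group
        _ = u * z⁻¹ * u⁻¹ := by rw [hconjneg v hv z hzN]
        _ = (u * z * u⁻¹)⁻¹ := by group
        _ = z := by rw [hconjneg u hu z hzN, inv_inv]
    have hsinv : s⁻¹ ∉ P := fun h' => hs (by simpa using P.inv_mem h')
    have hgs : ∀ g : G, g ∉ P → g * s⁻¹ ∈ P := fun g hg => hmul g s⁻¹ hg hsinv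
    have hsinvz : s⁻¹ * z * s = z⁻¹ := by
      have h' := hconjneg s⁻¹ hsinv z hzN
      rwa [inv_inv] at h'
    have hsPconj : ∀ g : G, g ∈ P → s * g * s⁻¹ ∈ P := by
      intro g hg
      apply hPof
      have hgz : g * z⁻¹ * g⁻¹ = z⁻¹ := hPconj g hg z⁻¹ (N.inv_mem hzN)
      calc (s*g*s⁻¹)*z*(s*g*s⁻¹)⁻¹ = s*(g*(s⁻¹*z*s)*g⁻¹)*s⁻¹ := by group
        _ = s*(g*z⁻¹*g⁻¹)*s⁻¹ := by rw [hsinvz]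
        _ = s*z⁻¹*s⁻¹ := by rw [hgz]
        _ = (s*z*s⁻¹)⁻¹ := by group
        _ = z := by rw [hconjneg s hs z hzN, inv_inv]
    have hPmul1 : ∀ x y : G, x ∈ P → y ∉ P → x * y ∉ P := by
      intro x y hx hy hxy
      have h' := P.mul_mem (P.inv_mem hx) hxy
      rw [inv_mul_cancel_left] at h'
      exact hy h'
    have hPmul2 : ∀ x y : G, x ∉ P → y ∈ P → x * y ∉ P := by
      intro x y hx hy hxy
      have h' := P.mul_mem hxy (P.inv_mem hy)
      rw [mul_inv_cancel_right] at h'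
      exact hx h'
    have hVanti : ∀ (g : ↥P), V ⟨s * (g:G) * s⁻¹, hsPconj _ g.2⟩ = (V g)⁻¹ := by
      intro g
      rw [hVval, hVval]
      have h3 : (⟨((⟨s * (g:G) * s⁻¹, hsPconj _ g.2⟩ : ↥P) : G) ^ n, hpowmem _⟩ : ↥N)
          = (⟨((g:G))^n, hpowmem g⟩ : ↥N)⁻¹ := by
        apply Subtype.ext
        show (s * (g:G) * s⁻¹) ^ n = (((g:G))^n)⁻¹
        calc (s * (g:G) * s⁻¹) ^ n = s * ((g:G))^n * s⁻¹ := conj_pow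
          _ = (((g:G))^n)⁻¹ := hconjneg s hs _ (hpowmem g)
      rw [h3, map_inv]
    have hSne : V.range ≠ ⊥ := by
      intro hbot
      have hmem' : V ⟨z, hzP⟩ ∈ V.range := ⟨_, rfl⟩
      rw [hbot, Subgroup.mem_bot] at hmem'
      exact hVzne hmem'
    obtain ⟨e⟩ := subgroup_int_equiv V.range hSne
    set ψ : ↥P →* Multiplicative ℤ := e.toMonoidHom.comp V.rangeRestrict with hψdef
    have hψsurj : Function.Surjective ψ := e.surjective.comp V.rangeRestrict_surjective
    have hψker : ∀ x : ↥P, ψ x = 1 → V x = 1 := by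
      intro x hx
      have h1 : V.rangeRestrict x = 1 := by
        apply e.injective
        rw [map_one]
        exact hx
      have h2 := congrArg Subtype.val h1
      simpa using h2
    have hψanti : ∀ (g : ↥P), ψ ⟨s*(g:G)*s⁻¹, hsPconj _ g.2⟩ = (ψ g)⁻¹ := by
      intro g
      have h1 : V.rangeRestrict ⟨s*(g:G)*s⁻¹, hsPconj _ g.2⟩ = (V.rangeRestrict g)⁻¹ :=
        Subtype.ext (by simpa using hVanti g)
      rw [hψdef]
      simp only [MonoidHom.comp_apply]
      rw [h1, map_inv]
    set t : ↥P → ℤ := fun p => Multiplicative.toAdd (ψ p) with htdef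
    have ht1 : ∀ p q : ↥P, t (p * q) = t p + t q := by
      intro p q; simp [htdef, map_mul]
    have htanti : ∀ (g : G) (hg : g ∈ P) (hg' : s * g * s⁻¹ ∈ P),
        t ⟨s*g*s⁻¹, hg'⟩ = - t ⟨g, hg⟩ := by
      intro g hg hg'
      have h' := hψanti ⟨g, hg⟩
      have heq2 : (⟨s*g*s⁻¹, hg'⟩ : ↥P) = ⟨s*g*s⁻¹, hsPconj _ hg⟩ := rfl
      rw [htdef]
      simp only [heq2, h']
      rfl
    have htss : ∀ (hss' : s * s ∈ P), t ⟨s*s, hss'⟩ = 0 := by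
      intro hss'
      have h1 : s * (s*s) * s⁻¹ = s*s := by group
      have hmm : s*(s*s)*s⁻¹ ∈ P := by rw [h1]; exact hss'
      have h2 := htanti (s*s) hss' hmm
      have h3 : (⟨s*(s*s)*s⁻¹, hmm⟩ : ↥P) = ⟨s*s, hss'⟩ := Subtype.ext h1
      rw [h3] at h2
      omega
    -- the homomorphism to the infinite dihedral group
    set F : G → DihedralGroup 0 := fun g =>
      if hg : g ∈ P then DihedralGroup.r (t ⟨g, hg⟩)
      else DihedralGroup.sr (-(t ⟨g * s⁻¹, hgs g hg⟩)) with hFdef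
    have hFP : ∀ (g : G) (hg : g ∈ P), F g = DihedralGroup.r (t ⟨g, hg⟩) := by
      intro g hg; rw [hFdef]; simp only [dif_pos hg]
    have hFnP : ∀ (g : G) (hg : g ∉ P),
        F g = DihedralGroup.sr (-(t ⟨g * s⁻¹, hgs g hg⟩)) := by
      intro g hg; rw [hFdef]; simp only [dif_neg hg]
    have hFmul : ∀ x y : G, F (x * y) = F x * F y := by
      intro x y
      by_cases hx : x ∈ P <;> by_cases hy : y ∈ P
      · have hxy : x * y ∈ P := P.mul_mem hx hy
        have heq : (⟨x*y, hxy⟩ : ↥P) = ⟨x,hx⟩ * ⟨y,hy⟩ := rfl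
        have harg : t ⟨x*y, hxy⟩ = t ⟨x,hx⟩ + t ⟨y,hy⟩ := by rw [heq, ht1]
        rw [hFP x hx, hFP y hy, hFP _ hxy, harg, d0_r_mul_r]
      · have hxy : x * y ∉ P := hPmul1 x y hx hy
        have heq : (⟨x*y*s⁻¹, hgs _ hxy⟩ : ↥P) = ⟨x,hx⟩ * ⟨y*s⁻¹, hgs y hy⟩ :=
          Subtype.ext (show x*y*s⁻¹ = x*(y*s⁻¹) by group)
        have harg : -(t ⟨x*y*s⁻¹, hgs _ hxy⟩) = -(t ⟨y*s⁻¹, hgs y hy⟩) - t ⟨x,hx⟩ := by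
          rw [heq, ht1]; ring
        rw [hFP x hx, hFnP y hy, hFnP _ hxy, harg, d0_r_mul_sr]
      · have hxy : x * y ∉ P := hPmul2 x y hx hy
        have hc : s * y * s⁻¹ ∈ P := hsPconj y hy
        have heq : (⟨x*y*s⁻¹, hgs _ hxy⟩ : ↥P) = ⟨x*s⁻¹, hgs x hx⟩ * ⟨s*y*s⁻¹, hc⟩ :=
          Subtype.ext (show x*y*s⁻¹ = (x*s⁻¹)*(s*y*s⁻¹) by group)
        have harg : -(t ⟨x*y*s⁻¹, hgs _ hxy⟩) = -(t ⟨x*s⁻¹, hgs x hx⟩) + t ⟨y,hy⟩ := by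
          rw [heq, ht1, htanti y hy hc]; ring
        rw [hFnP x hx, hFP y hy, hFnP _ hxy, harg, d0_sr_mul_r]
      · have hxy : x * y ∈ P := hmul x y hx hy
        have hc : s * (y*s⁻¹) * s⁻¹ ∈ P := hsPconj _ (hgs y hy)
        have hss' : s * s ∈ P := hmul s s hs hs
        have heq : (⟨x*y, hxy⟩ : ↥P)
            = ⟨x*s⁻¹, hgs x hx⟩ * ⟨s*(y*s⁻¹)*s⁻¹, hc⟩ * ⟨s*s, hss'⟩ :=
          Subtype.ext (show x*y = (x*s⁻¹)*(s*(y*s⁻¹)*s⁻¹)*(s*s) by group)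
        have harg : t ⟨x*y, hxy⟩
            = -(t ⟨y*s⁻¹, hgs y hy⟩) - -(t ⟨x*s⁻¹, hgs x hx⟩) := by
          rw [heq, ht1, ht1, htanti _ (hgs y hy) hc, htss hss']; ring
        rw [hFnP x hx, hFnP y hy, hFP _ hxy, harg, d0_sr_mul_sr]
    set Fh : G →* DihedralGroup 0 := MonoidHom.mk' F hFmul with hFhdef
    refine ⟨Fh, ?_, ?_⟩
    · -- surjectivity
      rintro (i | i)
      · obtain ⟨p, hp⟩ := hψsurj (Multiplicative.ofAdd (show ℤ from i))
        have hp' : t p = (show ℤ from i) := by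
          show Multiplicative.toAdd (ψ p) = _
          rw [hp]
          rfl
        refine ⟨(p : G), ?_⟩
        have h1 : Fh ((p : G)) = DihedralGroup.r (t ⟨(p : G), p.2⟩) := hFP _ p.2
        have h2 : (⟨(p : G), p.2⟩ : ↥P) = p := rfl
        rw [h1, h2, hp']
      · obtain ⟨p, hp⟩ := hψsurj (Multiplicative.ofAdd (-(show ℤ from i)))
        have hp' : t p = -(show ℤ from i) := by
          show Multiplicative.toAdd (ψ p) = _
          rw [hp]
          rfl
        have hpnot : (p : G) * s ∉ P := hPmul1 _ s p.2 hs
        refine ⟨(p : G) * s, ?_⟩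
        have h1 : Fh ((p : G) * s)
            = DihedralGroup.sr (-(t ⟨(p : G) * s * s⁻¹, hgs _ hpnot⟩)) := hFnP _ hpnot
        have h2 : (⟨(p : G) * s * s⁻¹, hgs _ hpnot⟩ : ↥P) = p :=
          Subtype.ext (show (p : G) * s * s⁻¹ = (p : G) by group)
        rw [h1, h2, hp', neg_neg]
    · -- finite kernel
      have hxP : ∀ x : G, x ∈ Fh.ker → x ∈ P := by
        intro x hx
        by_contra hxp
        have h1 : Fh x = 1 := hx
        have h2 : F x = 1 := h1
        rw [hFnP x hxp] at h2
        cases h2.trans DihedralGroup.one_def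
      have hxV : ∀ (x : G) (hx : x ∈ Fh.ker), V ⟨x, hxP x hx⟩ = 1 := by
        intro x hx
        apply hψker
        have h2 : F x = 1 := hx
        rw [hFP x (hxP x hx), DihedralGroup.one_def] at h2
        have h3 : t ⟨x, hxP x hx⟩ = 0 := by injection h2
        rw [htdef] at h3
        have h4 : Multiplicative.toAdd (ψ ⟨x, hxP x hx⟩) = 0 := h3
        have := congrArg Multiplicative.ofAdd h4
        simpa using this
      have hinj : Function.Injective
          (fun x : ↥Fh.ker => (⟨⟨(x : G), hxP _ x.2⟩, hxV _ x.2⟩ : ↥V.ker)) := by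
        intro x y hxy
        have h' := congrArg (fun w : ↥V.ker => ((w : ↥P) : G)) hxy
        exact Subtype.ext h'
      exact Finite.of_injective _ hinj
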